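/- Let M > 0, let p : ℝ → ℝ be twice continuously differentiable, W : ℝ → ℝ continuous, and m_n ∈ ℝ. Define z : ℝ → ℝ by z(y) = ∫₀^y exp(p(u)/12M³) du; since the integrand is positive, z is a diffeomorphism of ℝ onto its image, with inverse y(z). Suppose f : ℝ → ℝ is twice continuously differentiable and satisfies, for all y, 24M⁶ m_n² e^{p(y)/6M³} f(y) = −24M⁶ f''(y) + 10M³ p'(y) f'(y) + [4M³ p''(y) − p'(y)² + 24M⁶ W(y)] f(y). Then the function f̃(z) := e^{−p(y(z))/6M³} f(y(z)) satisfies, for all z in the image of ℝ, −f̃''(z) + e^{−p(y(z))/6M³} W(y(z)) f̃(z) = m_n² f̃(z). -/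

import Mathlib

open Filter


/-- Change to conformal coordinates: the warped-space Kaluza–Klein profile equation
becomes a 1-dimensional time-independent Schrödinger equation for
`f̃(z) = e^{−p(y(z))/6M³} f(y(z))` with potential `e^{−p/6M³}W`. -/
theorem conformal_coordinates_schrodinger_form
    (M : ℝ) (hM : 0 < M)
    (p W : ℝ → ℝ) (hp : ContDiff ℝ 2 p) (hW : Continuous W)
    (mn : ℝ)
    (f : ℝ → ℝ) (hf : ContDiff ℝ 2 f)
    (Z Y : ℝ → ℝ)
    (hZ : ∀ y : ℝ, Z y = ∫ u in (0:ℝ)..y, Real.exp (p u / (12 * M ^ 3)))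
    (hY : ∀ y : ℝ, Y (Z y) = y)
    (heq : ∀ y : ℝ,
      24 * M ^ 6 * mn ^ 2 * Real.exp (p y / (6 * M ^ 3)) * f y
        = -24 * M ^ 6 * deriv (deriv f) y + 10 * M ^ 3 * deriv p y * deriv f y
          + (4 * M ^ 3 * deriv (deriv p) y - (deriv p y) ^ 2 + 24 * M ^ 6 * W y) * f y)
    (F : ℝ → ℝ)
    (hF : ∀ z : ℝ, F z = Real.exp (-(p (Y z)) / (6 * M ^ 3)) * f (Y z)) :
    ∀ y : ℝ,
      -(deriv (deriv F) (Z y)) + Real.exp (-(p y) / (6 * M ^ 3)) * W y * F (Z y)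
        = mn ^ 2 * F (Z y) := by
  have hM0 : M ≠ 0 := ne_of_gt hM
  -- differentiability facts
  have hpd : Differentiable ℝ p := hp.differentiable (by norm_num)
  have hfd : Differentiable ℝ f := hf.differentiable (by norm_num)
  have hp2 : ContDiff ℝ 1 (deriv p) := by
    rw [show (2 : WithTop ℕ∞) = 1 + 1 from rfl] at hp
    exact (contDiff_succ_iff_deriv.mp hp).2.2
  have hf2 : ContDiff ℝ 1 (deriv f) := by
    rw [show (2 : WithTop ℕ∞) = 1 + 1 from rfl] at hf
    exact (contDiff_succ_iff_deriv.mp hf).2.2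
  have hpdd : Differentiable ℝ (deriv p) := hp2.differentiable one_ne_zero
  have hfdd : Differentiable ℝ (deriv f) := hf2.differentiable one_ne_zero
  have hp0 : ∀ x, HasDerivAt p (deriv p x) x := fun x => (hpd x).hasDerivAt
  have hp1d : ∀ x, HasDerivAt (deriv p) (deriv (deriv p) x) x := fun x => (hpdd x).hasDerivAt
  have hf0 : ∀ x, HasDerivAt f (deriv f x) x := fun x => (hfd x).hasDerivAt
  have hf1d : ∀ x, HasDerivAt (deriv f) (deriv (deriv f) x) x := fun x => (hfdd x).hasDerivAt
  -- Z has strict derivative exp (p x / (12 M^3))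
  have hc : Continuous fun u => Real.exp (p u / (12 * M ^ 3)) :=
    Real.continuous_exp.comp (hp.continuous.div_const _)
  have hZs : ∀ x, HasStrictDerivAt Z (Real.exp (p x / (12 * M ^ 3))) x := by
    intro x
    have h := intervalIntegral.integral_hasStrictDerivAt_right
      (hc.intervalIntegrable 0 x) (hc.stronglyMeasurableAtFilter _ _) hc.continuousAt
    exact h.congr_of_eventuallyEq (Eventually.of_forall fun t => (hZ t).symm)
  have hZne : ∀ x, Real.exp (p x / (12 * M ^ 3)) ≠ 0 := fun x => Real.exp_ne_zero _
  have hYs : ∀ x, HasStrictDerivAt Y (Real.exp (p x / (12 * M ^ 3)))⁻¹ (Z x) := fun x =>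
    (hZs x).to_local_left_inverse (hZne x) (Eventually.of_forall hY)
  have hFeq : F = fun z => Real.exp (-(p (Y z)) / (6 * M ^ 3)) * f (Y z) := funext hF
  -- first derivative of F at points of the range of Z
  have hG : ∀ x, HasDerivAt (fun t => Real.exp (-p t / (6 * M ^ 3)) * f t)
      (Real.exp (-p x / (6 * M ^ 3)) * (-deriv p x / (6 * M ^ 3)) * f x
        + Real.exp (-p x / (6 * M ^ 3)) * deriv f x) x := fun x =>
    (((hp0 x).neg.div_const _).exp).mul (hf0 x)
  have hFder : ∀ x, HasDerivAt F
      ((Real.exp (-p x / (6 * M ^ 3)) * (-deriv p x / (6 * M ^ 3)) * f x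
        + Real.exp (-p x / (6 * M ^ 3)) * deriv f x)
        * (Real.exp (p x / (12 * M ^ 3)))⁻¹) (Z x) := by
    intro x
    have hGx : HasDerivAt (fun t => Real.exp (-p t / (6 * M ^ 3)) * f t)
        (Real.exp (-p x / (6 * M ^ 3)) * (-deriv p x / (6 * M ^ 3)) * f x
          + Real.exp (-p x / (6 * M ^ 3)) * deriv f x) (Y (Z x)) := by
      rw [hY x]; exact hG x
    have h := hGx.comp (Z x) (hYs x).hasDerivAt
    rw [hFeq]
    exact h
  intro y
  -- near Z y, every point is in the range of Z
  have hrange : ∀ᶠ z in nhds (Z y), z ∈ Set.range Z := by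
    rw [← (hZs y).map_nhds_eq (hZne y)]
    exact eventually_map.mpr (Eventually.of_forall fun x => ⟨x, rfl⟩)
  have hdFeq : deriv F =ᶠ[nhds (Z y)] fun z =>
      (Real.exp (-p (Y z) / (6 * M ^ 3)) * (-deriv p (Y z) / (6 * M ^ 3)) * f (Y z)
        + Real.exp (-p (Y z) / (6 * M ^ 3)) * deriv f (Y z))
        * (Real.exp (p (Y z) / (12 * M ^ 3)))⁻¹ := by
    filter_upwards [hrange] with z hz
    obtain ⟨x, rfl⟩ := hz
    rw [hY x]
    exact (hFder x).deriv
  -- derivative of the expression above, as a function of the underlying coordinate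
  have hg1y :
      HasDerivAt (fun t => Real.exp (-p t / (6 * M ^ 3)) * (-deriv p t / (6 * M ^ 3)) * f t
        + Real.exp (-p t / (6 * M ^ 3)) * deriv f t)
      ((((Real.exp (-p y / (6 * M ^ 3)) * (-deriv p y / (6 * M ^ 3)))
           * (-deriv p y / (6 * M ^ 3))
          + Real.exp (-p y / (6 * M ^ 3)) * (-deriv (deriv p) y / (6 * M ^ 3))) * f y
        + Real.exp (-p y / (6 * M ^ 3)) * (-deriv p y / (6 * M ^ 3)) * deriv f y)
        + (Real.exp (-p y / (6 * M ^ 3)) * (-deriv p y / (6 * M ^ 3)) * deriv f y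
            + Real.exp (-p y / (6 * M ^ 3)) * deriv (deriv f) y)) y := by
    exact (((((hp0 y).neg.div_const _).exp).mul ((hp1d y).neg.div_const _)).mul (hf0 y)).add
      ((((hp0 y).neg.div_const _).exp).mul (hf1d y))
  have hφinvy : HasDerivAt (fun t => (Real.exp (p t / (12 * M ^ 3)))⁻¹)
      (-(Real.exp (p y / (12 * M ^ 3)) * (deriv p y / (12 * M ^ 3)))
        / Real.exp (p y / (12 * M ^ 3)) ^ 2) y :=
    (((hp0 y).div_const _).exp).inv (hZne y)
  have hHy := hg1y.mul hφinvy
  rw [← hY y] at hHy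
  have hcomp2 := hHy.comp (Z y) (hYs y).hasDerivAt
  have hddF := hcomp2.congr_of_eventuallyEq hdFeq
  have h2 := hddF.deriv
  simp only [hY] at h2
  rw [hF (Z y), hY y]
  -- algebra
  set A := Real.exp (p y / (12 * M ^ 3)) with hA
  have hApos : 0 < A := Real.exp_pos _
  have hA2 : Real.exp (p y / (6 * M ^ 3)) = A * A := by
    rw [hA, ← Real.exp_add]
    congr 1
    field_simp
    ring
  have hA6 : Real.exp (-p y / (6 * M ^ 3)) = (A * A)⁻¹ := by
    rw [← hA2, ← Real.exp_neg]
    congr 1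
    ring
  have hAne : A ≠ 0 := ne_of_gt hApos
  have heqy := heq y
  rw [hA2] at heqy
  have h2' : deriv (deriv F) (Z y)
      = (deriv (deriv f) y - (5 * deriv p y / (12 * M ^ 3)) * deriv f y
          + (6 * (deriv p y) ^ 2 / (144 * M ^ 6) - 2 * deriv (deriv p) y / (12 * M ^ 3)) * f y)
        / A ^ 4 := by
    rw [h2, hA6]
    field_simp
    ring
  have hff : deriv (deriv f) y
      = (10 * M ^ 3 * deriv p y * deriv f y
          + (4 * M ^ 3 * deriv (deriv p) y - (deriv p y) ^ 2 + 24 * M ^ 6 * W y) * f y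
          - 24 * M ^ 6 * mn ^ 2 * (A * A) * f y) / (24 * M ^ 6) := by
    field_simp
    linarith [heqy]
  rw [h2', hA6, hff]
  field_simp
  ring
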